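/- Let f(x) = a x^2 + b x + c with integer coefficients and D = b^2 - 4ac such that D ≠ a^2 i^2 for all 1 ≤ i ≤ k, and B_k = lcm_{1 ≤ i ≤ k} { i·(a^2 i^2 - D) }. Then for all positive integers n outside the zero set of f(n), f(n+1), ..., f(n+k), and all 0 ≤ i < j ≤ k, gcd(f(n+i), f(n+j)) = gcd(f(n+B_k+i), f(n+B_k+j)). -/

import Mathlib

/-- gcd(f(m), f(m+d)) divides d*(a²d² - D). -/
lemma gcd_dvd_key (a b c m d : ℤ) :
    (Int.gcd (a*m^2+b*m+c) (a*(m+d)^2+b*(m+d)+c) : ℤ) ∣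
      d*(a^2*d^2 - (b^2-4*a*c)) := by
  have h1 : (Int.gcd (a*m^2+b*m+c) (a*(m+d)^2+b*(m+d)+c) : ℤ) ∣ a*m^2+b*m+c :=
    Int.gcd_dvd_left _ _
  have h2 : (Int.gcd (a*m^2+b*m+c) (a*(m+d)^2+b*(m+d)+c) : ℤ) ∣
      a*(m+d)^2+b*(m+d)+c := Int.gcd_dvd_right _ _
  have h3 := (dvd_sub h2 h1).mul_right (2*a*m+b - a*d)
  have h4 := h1.mul_left (d*(4*a))
  have e : d*(a^2*d^2 - (b^2-4*a*c)) =
      d*(4*a)*(a*m^2+b*m+c)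
        - (a*(m+d)^2+b*(m+d)+c - (a*m^2+b*m+c))*(2*a*m+b - a*d) := by ring
  rw [e]; exact dvd_sub h4 h3

lemma gcd_shift_aux (a b c B m d : ℤ)
    (hB : d*(a^2*d^2 - (b^2-4*a*c)) ∣ B) :
    Int.gcd (a*m^2+b*m+c) (a*(m+d)^2+b*(m+d)+c) ∣
      Int.gcd (a*(m+B)^2+b*(m+B)+c) (a*(m+B+d)^2+b*(m+B+d)+c) := by
  set g : ℤ := (Int.gcd (a*m^2+b*m+c) (a*(m+d)^2+b*(m+d)+c) : ℤ) with hg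
  have h1 : g ∣ a*m^2+b*m+c := Int.gcd_dvd_left _ _
  have h2 : g ∣ a*(m+d)^2+b*(m+d)+c := Int.gcd_dvd_right _ _
  have hgB : g ∣ B := (gcd_dvd_key a b c m d).trans hB
  have c1 : g ∣ a*(m+B)^2+b*(m+B)+c := by
    have e : a*(m+B)^2+b*(m+B)+c
        = (a*m^2+b*m+c) + B*(2*a*m + a*B + b) := by ring
    rw [e]; exact dvd_add h1 (hgB.mul_right _)
  have c2 : g ∣ a*(m+B+d)^2+b*(m+B+d)+c := by
    have e : a*(m+B+d)^2+b*(m+B+d)+c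
        = (a*(m+d)^2+b*(m+d)+c) + B*(2*a*(m+d) + a*B + b) := by ring
    rw [e]; exact dvd_add h2 (hgB.mul_right _)
  have := Int.dvd_coe_gcd c1 c2
  exact Int.natCast_dvd_natCast.mp this

theorem gcd_shift_Bk (a b c : ℤ) (k : ℕ) (hk : 1 ≤ k)
    (hD : ∀ i : ℕ, 1 ≤ i → i ≤ k → b^2 - 4*a*c ≠ a^2 * (i : ℤ)^2)
    (n : ℤ) (hn : 1 ≤ n)
    (hnz : ∀ i : ℕ, i ≤ k → a*(n+i)^2 + b*(n+i) + c ≠ 0)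
    (i j : ℕ) (hij : i < j) (hj : j ≤ k) :
    Int.gcd (a*(n+i)^2 + b*(n+i) + c) (a*(n+j)^2 + b*(n+j) + c)
      = Int.gcd
        (a*(n + (Finset.Icc 1 k).lcm
          (fun i : ℕ => (i : ℤ) * (a^2 * (i : ℤ)^2 - (b^2 - 4*a*c))) + i)^2
          + b*(n + (Finset.Icc 1 k).lcm
          (fun i : ℕ => (i : ℤ) * (a^2 * (i : ℤ)^2 - (b^2 - 4*a*c))) + i) + c)
        (a*(n + (Finset.Icc 1 k).lcm
          (fun i : ℕ => (i : ℤ) * (a^2 * (i : ℤ)^2 - (b^2 - 4*a*c))) + j)^2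
          + b*(n + (Finset.Icc 1 k).lcm
          (fun i : ℕ => (i : ℤ) * (a^2 * (i : ℤ)^2 - (b^2 - 4*a*c))) + j) + c) := by
  set B : ℤ := (Finset.Icc 1 k).lcm
    (fun i : ℕ => (i : ℤ) * (a^2 * (i : ℤ)^2 - (b^2 - 4*a*c))) with hBdef
  set d : ℕ := j - i with hd
  have hd1 : 1 ≤ d := by omega
  have hdk : d ≤ k := by omega
  have hmem : d ∈ Finset.Icc 1 k := Finset.mem_Icc.mpr ⟨hd1, hdk⟩
  have hdvdB : (d : ℤ) * (a^2 * (d : ℤ)^2 - (b^2 - 4*a*c)) ∣ B :=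
    Finset.dvd_lcm hmem
  have hdvdB' : (d : ℤ)*(a^2*(d : ℤ)^2 - (b^2-4*a*c)) ∣ B := by
    convert hdvdB using 2 <;> ring
  have hji : (j : ℤ) = (i : ℤ) + (d : ℤ) := by push_cast [hd]; omega
  have fwd := gcd_shift_aux a b c B (n + i) (d : ℤ) hdvdB'
  have hnegB : (d : ℤ)*(a^2*(d : ℤ)^2 - (b^2-4*a*c)) ∣ (-B) := hdvdB'.neg_right
  have bwd := gcd_shift_aux a b c (-B) (n + B + i) (d : ℤ) hnegB
  have e1 : n + (j : ℤ) = (n + i) + d := by rw [hji]; ring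
  have e2 : n + B + (j : ℤ) = ((n + i) + B) + d := by rw [hji]; ring
  have e3 : n + B + (i : ℤ) = (n + i) + B := by ring
  have e4 : (n + B + i) + (-B) = n + (i : ℤ) := by ring
  have e5 : ((n + B + i) + (-B)) + (d : ℤ) = n + (j : ℤ) := by rw [hji]; ring
  rw [e1, e2, e3]
  rw [e4, e3] at bwd
  exact Nat.dvd_antisymm fwd bwd
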